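/- Let q be a real number with 5/6 < q ≤ 1, let δ = q − 5/6 and s = 1/2 + 3√δ / (2√(1 + 3δ)), and define h(p) = q(p³ + 3p²(1−p)) + (1−q)(3p(1−p)² + (1−p)³). Then h(1/2) = 1/2 and h(s) = s; that is, both 1/2 and s are fixed points of h. -/

import Mathlib

/-- Both `1/2` and `s = 1/2 + 3√δ/(2√(1+3δ))` (with `δ = q - 5/6`) are fixed
points of `h(p) = q(p³ + 3p²(1-p)) + (1-q)(3p(1-p)² + (1-p)³)`. -/
theorem fixed_points_of_h (q : ℝ) (hq : 5/6 < q) (hq1 : q ≤ 1)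
    (δ s : ℝ) (hδ : δ = q - 5/6)
    (hs : s = 1/2 + 3 * Real.sqrt δ / (2 * Real.sqrt (1 + 3 * δ)))
    (h : ℝ → ℝ)
    (hh : ∀ p : ℝ, h p = q * (p^3 + 3*p^2*(1-p)) + (1-q) * (3*p*(1-p)^2 + (1-p)^3)) :
    h (1/2) = 1/2 ∧ h s = s := by
  have hδpos : 0 < δ := by linarith
  have h1 : (0:ℝ) < 1 + 3 * δ := by linarith
  have ha : Real.sqrt δ ^ 2 = δ := Real.sq_sqrt hδpos.le
  have hb : Real.sqrt (1 + 3 * δ) ^ 2 = 1 + 3 * δ := Real.sq_sqrt h1.le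
  have hbpos : 0 < Real.sqrt (1 + 3 * δ) := Real.sqrt_pos.mpr h1
  have hbne : Real.sqrt (1 + 3 * δ) ≠ 0 := ne_of_gt hbpos
  have h1ne : (1 + 3 * δ) ≠ 0 := ne_of_gt h1
  refine ⟨by rw [hh]; ring, ?_⟩
  have ht2 : (s - 1/2)^2 = 9 * δ / (4 * (1 + 3 * δ)) := by
    rw [hs]
    field_simp
    linear_combination 36 * (1 + 3*δ) * ha - 36 * δ * hb
  have key : h s - s = (s - 1/2) * ((2*q - 1) * (3/2 - 2*(s - 1/2)^2) - 1) := by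
    rw [hh]; ring
  have hz : (2*q - 1) * (3/2 - 2*(s - 1/2)^2) - 1 = 0 := by
    rw [ht2]
    field_simp
    linarith [hδ]
  have : h s - s = 0 := by rw [key, hz, mul_zero]
  linarith
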